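/- Let q be square-free and let A₁,…,A_s ⊆ (ℤ/qℤ)^× (s ∈ ℕ). Then there exist downsets A₁',…,A_s' ⊆ ℤ/qℤ such that |Aᵢ'| = |Aᵢ| for all i, u(Aᵢ) is an upper bound for Aᵢ' for all i, and |A₁'+⋯+A_s'| ≤ |A₁+⋯+A_s|. -/

import Mathlib

open Finset

/-- `D(v)`: the elements below `v` in every prime coordinate of squarefree `q`. -/
def Dset (q : ℕ) (v : ZMod q) : Set (ZMod q) :=
  {b | ∀ p ∈ q.primeFactors, b.val % p ≤ v.val % p}

/-- `A` is a downset in `ℤ/qℤ` (for `q` squarefree, coordinatewise order). -/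
def IsDownset (q : ℕ) (A : Finset (ZMod q)) : Prop :=
  ∀ v ∈ A, ∀ b : ZMod q, b ∈ Dset q v → b ∈ A

/-- The `s`-fold sumset of a family of finsets in `ℤ/qℤ`. -/
def finSumset (q s : ℕ) (A : Fin s → Finset (ZMod q)) : Finset (ZMod q) :=
  (Fintype.piFinset A).image (fun f => ∑ i, f i)

/-! ### General helpers -/

section Fsum

open scoped Pointwise

variable {M : Type*} [AddCommMonoid M] [DecidableEq M]

/-- general `s`-fold sumset -/
def fsum {s : ℕ} (B : Fin s → Finset M) : Finset M :=
  (Fintype.piFinset B).image (fun f => ∑ i, f i)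

lemma mem_fsum {s : ℕ} {B : Fin s → Finset M} {x : M} :
    x ∈ fsum B ↔ ∃ f : Fin s → M, (∀ i, f i ∈ B i) ∧ ∑ i, f i = x := by
  simp [fsum, Fintype.mem_piFinset]

lemma fsum_nonempty {s : ℕ} {B : Fin s → Finset M} (h : ∀ i, (B i).Nonempty) :
    (fsum B).Nonempty := by
  choose f hf using h
  exact ⟨∑ i, f i, mem_fsum.mpr ⟨f, hf, rfl⟩⟩

lemma fsum_succ {s : ℕ} (B : Fin (s + 1) → Finset M) :
    fsum B = B 0 + fsum (fun i : Fin s => B i.succ) := by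
  ext x
  rw [Finset.mem_add, mem_fsum]
  constructor
  · rintro ⟨f, hf, rfl⟩
    exact ⟨f 0, hf 0, ∑ i : Fin s, f i.succ,
      mem_fsum.mpr ⟨fun i => f i.succ, fun i => hf i.succ, rfl⟩,
      (Fin.sum_univ_succ f).symm⟩
  · rintro ⟨a, ha, y, hy, rfl⟩
    obtain ⟨g, hg, rfl⟩ := mem_fsum.mp hy
    refine ⟨Fin.cons a g, fun i => ?_, ?_⟩
    · induction i using Fin.cases <;> simp [ha, hg]
    · rw [Fin.sum_univ_succ]; simp

lemma fsum_image {N : Type*} [AddCommMonoid N] [DecidableEq N]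
    {F : Type*} [FunLike F M N] [AddMonoidHomClass F M N] (φ : F) {s : ℕ}
    (B : Fin s → Finset M) :
    fsum (fun i => (B i).image φ) = (fsum B).image φ := by
  ext x
  rw [mem_fsum, Finset.mem_image]
  constructor
  · rintro ⟨f, hf, rfl⟩
    choose g hg hgf using fun i => Finset.mem_image.mp (hf i)
    refine ⟨∑ i, g i, mem_fsum.mpr ⟨g, hg, rfl⟩, ?_⟩
    rw [map_sum]
    exact Finset.sum_congr rfl fun i _ => hgf i
  · rintro ⟨y, hy, rfl⟩
    obtain ⟨g, hg, rfl⟩ := mem_fsum.mp hy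
    exact ⟨fun i => φ (g i), fun i => Finset.mem_image_of_mem _ (hg i),
      (map_sum φ g univ).symm⟩

end Fsum

/-! ### ZMod helpers -/

lemma card_val_lt {m : ℕ} [NeZero m] (c : ℕ) :
    (univ.filter (fun t : ZMod m => t.val < c)).card = min c m := by
  have h : (univ.filter (fun t : ZMod m => t.val < c))
      = (Finset.range (min c m)).image (Nat.cast : ℕ → ZMod m) := by
    ext t
    simp only [mem_filter, mem_univ, true_and, Finset.mem_image, Finset.mem_range]
    constructor
    · intro h
      exact ⟨t.val, lt_min h (ZMod.val_lt t), ZMod.natCast_rightInverse t⟩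
    · rintro ⟨k, hk, rfl⟩
      rw [ZMod.val_natCast]
      have h1 : k % m ≤ k := Nat.mod_le _ _
      omega
  rw [h, Finset.card_image_of_injOn, Finset.card_range]
  intro a ha b hb hab
  rw [Finset.coe_range, Set.mem_Iio] at ha hb
  have := congrArg ZMod.val hab
  rw [ZMod.val_natCast, ZMod.val_natCast] at this
  have hm := min_le_right c m
  rw [Nat.mod_eq_of_lt (by omega), Nat.mod_eq_of_lt (by omega)] at this
  exact this

lemma val_sum_le {m : ℕ} [NeZero m] {β : Type*} (s : Finset β) (v : β → ZMod m) :
    (∑ i ∈ s, v i).val ≤ ∑ i ∈ s, (v i).val := by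
  classical
  induction s using Finset.cons_induction with
  | empty => simp
  | cons a s ha ih =>
    rw [Finset.sum_cons, Finset.sum_cons, ZMod.val_add]
    exact le_trans (Nat.mod_le _ _) (by omega)

lemma castHom_val {a b : ℕ} [NeZero a] [NeZero b] (h : b ∣ a) (x : ZMod a) :
    (ZMod.castHom h (ZMod b) x).val = x.val % b := by
  have h1 : ZMod.castHom h (ZMod b) x = ((x.val : ℕ) : ZMod b) := by
    conv_lhs => rw [← ZMod.natCast_rightInverse x, map_natCast]
  rw [h1, ZMod.val_natCast]

/-! ### s-fold Cauchy–Davenport -/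

lemma cd_fold {p : ℕ} (hp : p.Prime) :
    ∀ (s : ℕ) (B : Fin s → Finset (ZMod p)), (∀ i, (B i).Nonempty) →
      min p (∑ i, (B i).card + 1 - s) ≤ (fsum B).card := by
  intro s
  induction s with
  | zero =>
    intro B _
    have h1 : fsum B = {0} := by
      ext x
      rw [mem_fsum]
      constructor
      · rintro ⟨f, -, rfl⟩; simp
      · intro hx
        refine ⟨Fin.elim0, fun i => i.elim0, ?_⟩
        simp only [Finset.mem_singleton] at hx
        simp [hx]
    rw [h1]
    simp
  | succ s ih =>
    intro B hB
    rw [fsum_succ]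
    have hT := fsum_nonempty (fun i : Fin s => hB i.succ)
    have h1 := ZMod.cauchy_davenport hp (hB 0) hT
    have h2 : min p ((∑ i : Fin s, (B i.succ).card) + 1 - s)
        ≤ (fsum fun i : Fin s => B i.succ).card :=
      ih (fun i => B i.succ) (fun i => hB i.succ)
    have h3 : 1 ≤ (B 0).card := Finset.card_pos.mpr (hB 0)
    have h4 : s ≤ ∑ i : Fin s, (B i.succ).card := by
      calc s = ∑ _i : Fin s, 1 := by simp
      _ ≤ _ := Finset.sum_le_sum (fun i _ => Finset.card_pos.mpr (hB i.succ))
    rw [Fin.sum_univ_succ]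
    omega

/-! ### Compressions in the product of prime cyclic groups -/

section PiWorld

variable {ι : Type*} [Fintype ι] [DecidableEq ι] {n : ι → ℕ} [hn : ∀ i, Fact (n i).Prime]

instance piworld_neZero (i : ι) : NeZero (n i) := ⟨(hn i).out.ne_zero⟩

/-- the fiber of `A` over the class of `a` off coordinate `j` -/
def fib (j : ι) (A : Finset (∀ i, ZMod (n i))) (a : ∀ i, ZMod (n i)) :
    Finset (ZMod (n j)) :=
  univ.filter (fun t => Function.update a j t ∈ A)

/-- compression of `A` in coordinate `j` -/
def cp (j : ι) (A : Finset (∀ i, ZMod (n i))) : Finset (∀ i, ZMod (n i)) :=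
  univ.filter (fun a => (a j).val < (fib j A a).card)

lemma mem_fib {j : ι} {A : Finset (∀ i, ZMod (n i))} {a : ∀ i, ZMod (n i)}
    {t : ZMod (n j)} : t ∈ fib j A a ↔ Function.update a j t ∈ A := by
  simp [fib]

lemma fib_update (j : ι) (A : Finset (∀ i, ZMod (n i))) (a : ∀ i, ZMod (n i))
    (t : ZMod (n j)) : fib j A (Function.update a j t) = fib j A a := by
  ext x
  simp [fib, Function.update_idem]

lemma mem_cp {j : ι} {A : Finset (∀ i, ZMod (n i))} {a : ∀ i, ZMod (n i)} :
    a ∈ cp j A ↔ (a j).val < (fib j A a).card := by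
  simp [cp]

lemma fib_cp (j : ι) (A : Finset (∀ i, ZMod (n i))) (a : ∀ i, ZMod (n i)) :
    fib j (cp j A) a = univ.filter (fun t : ZMod (n j) => t.val < (fib j A a).card) := by
  ext t
  simp only [mem_fib, mem_cp, Function.update_self, fib_update, mem_filter, mem_univ,
    true_and]

lemma card_fib_le (j : ι) (A : Finset (∀ i, ZMod (n i))) (a : ∀ i, ZMod (n i)) :
    (fib j A a).card ≤ n j := by
  calc (fib j A a).card ≤ (univ : Finset (ZMod (n j))).card :=
        Finset.card_le_card (Finset.filter_subset _ _)
  _ = n j := by rw [Finset.card_univ, ZMod.card]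

lemma card_fib_cp (j : ι) (A : Finset (∀ i, ZMod (n i))) (a : ∀ i, ZMod (n i)) :
    (fib j (cp j A) a).card = (fib j A a).card := by
  rw [fib_cp, card_val_lt, min_eq_left (card_fib_le j A a)]

lemma card_eq_sum_fib (j : ι) (A : Finset (∀ i, ZMod (n i))) :
    A.card = ∑ r ∈ univ.filter (fun r : ∀ i, ZMod (n i) => r j = 0), (fib j A r).card := by
  rw [Finset.card_eq_sum_card_fiberwise
    (f := fun a => Function.update a j 0)
    (t := univ.filter (fun r : ∀ i, ZMod (n i) => r j = 0))
    (fun x _ => by simp [Function.update_self])]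
  apply Finset.sum_congr rfl
  intro r hr
  have hrj : r j = 0 := (Finset.mem_filter.mp hr).2
  apply Finset.card_nbij' (i := fun a => a j) (j := fun t => Function.update r j t)
  · intro a ha
    rw [Finset.mem_coe, Finset.mem_filter] at ha
    obtain ⟨haA, har⟩ := ha
    rw [Finset.mem_coe, mem_fib]
    have : Function.update r j (a j) = a := by
      rw [← har, Function.update_idem, Function.update_eq_self]
    rwa [this]
  · intro t ht
    rw [Finset.mem_coe, mem_fib] at ht
    rw [Finset.mem_coe, Finset.mem_filter]
    refine ⟨ht, ?_⟩
    rw [Function.update_idem]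
    rw [Function.update_eq_self_iff]
    exact hrj.symm
  · intro a ha
    rw [Finset.mem_coe, Finset.mem_filter] at ha
    beta_reduce
    rw [← ha.2, Function.update_idem, Function.update_eq_self]
  · intro t _
    beta_reduce
    rw [Function.update_self]

lemma card_cp (j : ι) (A : Finset (∀ i, ZMod (n i))) : (cp j A).card = A.card := by
  rw [card_eq_sum_fib j (cp j A), card_eq_sum_fib j A]
  exact Finset.sum_congr rfl fun r _ => card_fib_cp j A r

/-- `A` is compressed (downward closed) in coordinate `j` -/
def Cpt (j : ι) (A : Finset (∀ i, ZMod (n i))) : Prop :=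
  ∀ a ∈ A, ∀ t : ZMod (n j), t.val ≤ (a j).val → Function.update a j t ∈ A

lemma cpt_cp_self (j : ι) (A : Finset (∀ i, ZMod (n i))) : Cpt j (cp j A) := by
  intro a ha t ht
  rw [mem_cp] at ha ⊢
  rw [Function.update_self, fib_update]
  exact lt_of_le_of_lt ht ha

lemma fib_mono_of_cpt {k : ι} {A : Finset (∀ i, ZMod (n i))} (hA : Cpt k A) (j : ι)
    (a : ∀ i, ZMod (n i)) (t : ZMod (n k)) (ht : t.val ≤ (a k).val) (hkj : k ≠ j) :
    fib j A a ⊆ fib j A (Function.update a k t) := by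
  intro x hx
  rw [mem_fib] at hx ⊢
  rw [Function.update_comm hkj]
  exact hA _ hx t (by rwa [Function.update_of_ne hkj])

lemma cpt_cp (j k : ι) {A : Finset (∀ i, ZMod (n i))} (hA : Cpt k A) :
    Cpt k (cp j A) := by
  by_cases hkj : k = j
  · subst hkj; exact cpt_cp_self k A
  intro a ha t ht
  rw [mem_cp] at ha ⊢
  have h1 : Function.update a k t j = a j := Function.update_of_ne (Ne.symm hkj) _ _
  rw [h1]
  exact lt_of_lt_of_le ha (Finset.card_le_card (fib_mono_of_cpt hA j a t ht hkj))

lemma mem_of_cpt_all {A : Finset (∀ i, ZMod (n i))} (hA : ∀ j, Cpt j A)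
    {v : ∀ i, ZMod (n i)} (hv : v ∈ A) (b : ∀ i, ZMod (n i))
    (hb : ∀ j, (b j).val ≤ (v j).val) : b ∈ A := by
  have key : ∀ S : Finset ι, S.piecewise b v ∈ A := by
    intro S
    induction S using Finset.induction_on with
    | empty => simpa [Finset.piecewise_empty]
    | @insert j S hj ih =>
      rw [Finset.piecewise_insert]
      refine hA j _ ih (b j) ?_
      rw [Finset.piecewise_eq_of_notMem _ _ _ hj]
      exact hb j
  have h := key univ
  rwa [Finset.piecewise_univ] at h

lemma val_lt_card_image_of_cpt {j : ι} {A : Finset (∀ i, ZMod (n i))} (hA : Cpt j A)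
    {a : ∀ i, ZMod (n i)} (ha : a ∈ A) :
    (a j).val < (A.image (fun x => x j)).card := by
  have hsub : univ.filter (fun t : ZMod (n j) => t.val < (a j).val + 1)
      ⊆ A.image (fun x => x j) := by
    intro t ht
    rw [Finset.mem_filter] at ht
    have h := hA a ha t (by omega)
    exact Finset.mem_image.mpr ⟨_, h, Function.update_self _ _ _⟩
  have hc := Finset.card_le_card hsub
  rw [card_val_lt] at hc
  rw [min_eq_left (ZMod.val_lt (a j))] at hc
  exact hc

lemma card_image_cp_le (j k : ι) (A : Finset (∀ i, ZMod (n i))) :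
    ((cp k A).image (fun x => x j)).card ≤ (A.image (fun x => x j)).card := by
  by_cases hkj : k = j
  · subst hkj
    have hsub : (cp k A).image (fun x => x k)
        ⊆ univ.filter (fun t : ZMod (n k) => t.val < (A.image (fun x => x k)).card) := by
      intro t ht
      obtain ⟨a, ha, rfl⟩ := Finset.mem_image.mp ht
      rw [mem_cp] at ha
      have hfib : fib k A a ⊆ A.image (fun x => x k) := by
        intro x hx
        rw [mem_fib] at hx
        exact Finset.mem_image.mpr ⟨_, hx, Function.update_self _ _ _⟩
      simp only [Finset.mem_filter, Finset.mem_univ, true_and]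
      exact lt_of_lt_of_le ha (Finset.card_le_card hfib)
    have h := Finset.card_le_card hsub
    rw [card_val_lt] at h
    exact le_trans h (min_le_left _ _)
  · apply Finset.card_le_card
    intro t ht
    obtain ⟨a, ha, rfl⟩ := Finset.mem_image.mp ht
    rw [mem_cp] at ha
    obtain ⟨x, hx⟩ := Finset.card_pos.mp (lt_of_le_of_lt (Nat.zero_le _) ha)
    rw [mem_fib] at hx
    exact Finset.mem_image.mpr ⟨_, hx, Function.update_of_ne (Ne.symm hkj) _ _⟩

lemma card_fsum_cp_le (j : ι) {s : ℕ} (A : Fin s → Finset (∀ i, ZMod (n i))) :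
    (fsum (fun i => cp j (A i))).card ≤ (fsum A).card := by
  rcases Nat.eq_zero_or_pos s with rfl | hs
  · have h : (fun i : Fin 0 => cp j (A i)) = A := funext fun i => i.elim0
    rw [h]
  rw [card_eq_sum_fib j (fsum (fun i => cp j (A i))), card_eq_sum_fib j (fsum A)]
  apply Finset.sum_le_sum
  intro r _
  rcases Finset.eq_empty_or_nonempty (fib j (fsum (fun i => cp j (A i))) r) with he | hne
  · simp [he]
  classical
  set T : Finset (Fin s → ∀ i, ZMod (n i)) :=
    (Fintype.piFinset (fun _ : Fin s => (univ : Finset (∀ i, ZMod (n i))))).filter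
      (fun g => (∀ i, (fib j (A i) (g i)).Nonempty) ∧
        (∑ i, Function.update (g i) j 0) = Function.update r j 0) with hTdef
  have extract : ∀ x ∈ fib j (fsum (fun i => cp j (A i))) r,
      ∃ f : Fin s → ∀ i, ZMod (n i),
        (∀ i, f i ∈ cp j (A i)) ∧ (∑ i, f i) = Function.update r j x := by
    intro x hx
    rw [mem_fib] at hx
    exact mem_fsum.mp hx
  have hfT : ∀ (x : ZMod (n j)) (f : Fin s → ∀ i, ZMod (n i)),
      (∀ i, f i ∈ cp j (A i)) → (∑ i, f i) = Function.update r j x → f ∈ T := by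
    intro x f hf hsum
    rw [hTdef, Finset.mem_filter]
    refine ⟨Fintype.mem_piFinset.mpr fun i => Finset.mem_univ _, fun i => ?_, ?_⟩
    · exact Finset.card_pos.mp (lt_of_le_of_lt (Nat.zero_le _) (mem_cp.mp (hf i)))
    · funext k
      rw [Finset.sum_apply]
      by_cases hk : k = j
      · subst hk; simp [Function.update_self]
      · simp only [Function.update_of_ne hk]
        calc (∑ i, f i k) = (∑ i, f i) k := (Finset.sum_apply _ _ _).symm
        _ = r k := by rw [hsum, Function.update_of_ne hk]
  have hTne : T.Nonempty := by
    obtain ⟨x, hx⟩ := hne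
    obtain ⟨f, hf, hsum⟩ := extract x hx
    exact ⟨f, hfT x f hf hsum⟩
  obtain ⟨g, hgT, hgmax⟩ :=
    Finset.exists_max_image T (fun g => ∑ i, (fib j (A i) (g i)).card) hTne
  obtain ⟨-, hgne, hgsum⟩ := Finset.mem_filter.mp hgT
  set M := ∑ i, (fib j (A i) (g i)).card with hM
  clear_value M
  have hub : fib j (fsum (fun i => cp j (A i))) r
      ⊆ univ.filter (fun t : ZMod (n j) => t.val < M + 1 - s) := by
    intro x hx
    obtain ⟨f, hf, hsum⟩ := extract x hx
    have hm := hgmax f (hfT x f hf hsum)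
    have hx1 : x = ∑ i, f i j := by
      have h := congrFun hsum j
      rw [Finset.sum_apply, Function.update_self] at h
      exact h.symm
    have hx2 : x.val ≤ ∑ i, (f i j).val := by
      rw [hx1]
      exact val_sum_le _ _
    have hx4 : (∑ i, (f i j).val) + s ≤ ∑ i, (fib j (A i) (f i)).card := by
      calc (∑ i, (f i j).val) + s = ∑ i, ((f i j).val + 1) := by
            rw [Finset.sum_add_distrib]; simp
      _ ≤ _ := Finset.sum_le_sum fun i _ => mem_cp.mp (hf i)
    have hxM : x.val + s ≤ M := by
      calc x.val + s ≤ (∑ i, (f i j).val) + s := Nat.add_le_add_right hx2 s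
      _ ≤ ∑ i, (fib j (A i) (f i)).card := hx4
      _ ≤ M := hm
    simp only [Finset.mem_filter, Finset.mem_univ, true_and]
    omega
  have hub2 : (fib j (fsum (fun i => cp j (A i))) r).card ≤ min (M + 1 - s) (n j) := by
    have h := Finset.card_le_card hub
    rwa [card_val_lt] at h
  have hlb : min (n j) (M + 1 - s) ≤ (fib j (fsum A) r).card := by
    have hcd : min (n j) (M + 1 - s) ≤ (fsum (fun i => fib j (A i) (g i))).card := by
      rw [hM]
      exact cd_fold (hn j).out s (fun i => fib j (A i) (g i)) hgne
    refine le_trans hcd (Finset.card_le_card ?_)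
    intro x hx
    obtain ⟨xs, hxs, rfl⟩ := mem_fsum.mp hx
    rw [mem_fib]
    apply mem_fsum.mpr
    refine ⟨fun i => Function.update (g i) j (xs i), fun i => mem_fib.mp (hxs i), ?_⟩
    funext k
    rw [Finset.sum_apply]
    by_cases hk : k = j
    · subst hk
      simp [Function.update_self]
    · simp only [Function.update_of_ne hk]
      have h := congrFun hgsum k
      rw [Finset.sum_apply] at h
      simp only [Function.update_of_ne hk] at h
      exact h
  exact le_trans (le_trans hub2 (le_of_eq (min_comm _ _))) hlb

/-- iterated compression along a list of coordinates -/
def cps (L : List ι) (A : Finset (∀ i, ZMod (n i))) : Finset (∀ i, ZMod (n i)) :=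
  L.foldr (fun j B => cp j B) A

lemma card_cps (L : List ι) (A : Finset (∀ i, ZMod (n i))) :
    (cps L A).card = A.card := by
  induction L with
  | nil => rfl
  | cons k L ih => rw [show cps (k :: L) A = cp k (cps L A) from rfl, card_cp, ih]

lemma cpt_cps (L : List ι) (A : Finset (∀ i, ZMod (n i))) :
    ∀ j ∈ L, Cpt j (cps L A) := by
  induction L with
  | nil => simp
  | cons k L ih =>
    intro j hj
    rcases List.mem_cons.mp hj with rfl | hj'
    · exact cpt_cp_self j _
    · exact cpt_cp k j (ih j hj')

lemma card_image_cps_le (L : List ι) (A : Finset (∀ i, ZMod (n i))) (j : ι) :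
    ((cps L A).image (fun x => x j)).card ≤ (A.image (fun x => x j)).card := by
  induction L with
  | nil => exact le_rfl
  | cons k L ih =>
    exact le_trans (card_image_cp_le j k (cps L A)) ih

lemma card_fsum_cps_le (L : List ι) {s : ℕ} (A : Fin s → Finset (∀ i, ZMod (n i))) :
    (fsum (fun i => cps L (A i))).card ≤ (fsum A).card := by
  induction L with
  | nil => exact le_rfl
  | cons k L ih =>
    exact le_trans (card_fsum_cp_le k (fun i => cps L (A i))) ih

end PiWorld

/-! ### Main theorem -/

theorem stmt8 (q : ℕ) (hq : Squarefree q) (s : ℕ) (A : Fin s → Finset (ZMod q))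
    (hA : ∀ i, ∀ a ∈ A i, IsUnit a)
    (u : Fin s → ZMod q)
    (hu : ∀ i, ∀ p ∈ q.primeFactors,
      (u i).val % p = ((A i).image (fun a => a.val % p)).card % p) :
    ∃ A' : Fin s → Finset (ZMod q),
      (∀ i, (A' i).card = (A i).card) ∧
      (∀ i, IsDownset q (A' i)) ∧
      (∀ i, ∀ a ∈ A' i, ∀ p ∈ q.primeFactors, a.val % p < (u i).val % p) ∧
      (finSumset q s A').card ≤ (finSumset q s A).card := by
  classical
  haveI : NeZero q := ⟨by rintro rfl; exact not_squarefree_zero hq⟩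
  haveI hfact : ∀ p : {x // x ∈ q.primeFactors}, Fact ((p : ℕ)).Prime :=
    fun p => ⟨Nat.prime_of_mem_primeFactors p.2⟩
  have hprod : (∏ p : {x // x ∈ q.primeFactors}, (p : ℕ)) = q := by
    calc (∏ p : {x // x ∈ q.primeFactors}, (p : ℕ))
        = ∏ p ∈ q.primeFactors, p := Finset.prod_coe_sort q.primeFactors (fun p => p)
    _ = q := Nat.prod_primeFactors_of_squarefree hq
  have hcop : Pairwise (Function.onFun Nat.Coprime fun p : {x // x ∈ q.primeFactors} => (p : ℕ)) := by
    intro a b hab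
    exact (Nat.coprime_primes (hfact a).out (hfact b).out).mpr
      (fun h => hab (Subtype.ext h))
  let E : ZMod q ≃+* ∀ p : {x // x ∈ q.primeFactors}, ZMod (p : ℕ) :=
    (ZMod.ringEquivCongr hprod.symm).trans (ZMod.prodEquivPi _ hcop)
  have keyE : ∀ (x : ZMod q) (p : {x // x ∈ q.primeFactors}),
      (E x p).val = x.val % (p : ℕ) := by
    intro x p
    have hdvd : (p : ℕ) ∣ q := Nat.dvd_of_mem_primeFactors p.2
    have h1 : (Pi.evalRingHom (fun p : {x // x ∈ q.primeFactors} => ZMod (p : ℕ)) p).comp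
        (E : ZMod q →+* _) = ZMod.castHom hdvd (ZMod (p : ℕ)) := RingHom.ext_zmod _ _
    have h2 : E x p = ZMod.castHom hdvd (ZMod (p : ℕ)) x := by
      rw [← h1]; rfl
    rw [h2, castHom_val]
  set Ap : Fin s → Finset (∀ p : {x // x ∈ q.primeFactors}, ZMod (p : ℕ)) :=
    fun i => (A i).image E with hApdef
  set L := (univ : Finset {x // x ∈ q.primeFactors}).toList with hLdef
  set B : Fin s → Finset (∀ p : {x // x ∈ q.primeFactors}, ZMod (p : ℕ)) :=
    fun i => cps L (Ap i) with hBdef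
  have hmemL : ∀ j : {x // x ∈ q.primeFactors}, j ∈ L :=
    fun j => Finset.mem_toList.mpr (Finset.mem_univ j)
  refine ⟨fun i => (B i).image E.symm, ?_, ?_, ?_, ?_⟩
  · intro i
    rw [Finset.card_image_of_injective _ E.symm.injective, hBdef]
    rw [card_cps, hApdef]
    exact Finset.card_image_of_injective _ E.injective
  · intro i v hv b hb
    obtain ⟨v', hv', rfl⟩ := Finset.mem_image.mp hv
    have hmem : E b ∈ B i := by
      apply mem_of_cpt_all (fun j => cpt_cps L (Ap i) j (hmemL j)) hv'
      intro j
      have h1 : v' j = E (E.symm v') j := by rw [RingEquiv.apply_symm_apply]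
      rw [h1, keyE, keyE]
      exact hb (j : ℕ) j.2
    have hb2 : b = E.symm (E b) := (RingEquiv.symm_apply_apply E b).symm
    rw [hb2]
    exact Finset.mem_image_of_mem _ hmem
  · intro i a ha p hp
    obtain ⟨a', ha', rfl⟩ := Finset.mem_image.mp ha
    set j : {x // x ∈ q.primeFactors} := ⟨p, hp⟩ with hjdef
    have h0 : (E.symm a').val % p = (a' j).val := by
      rw [← keyE (E.symm a') j, RingEquiv.apply_symm_apply]
    have h1 : (a' j).val < ((Ap i).image (fun x => x j)).card := by
      have hcpt := cpt_cps L (Ap i) j (hmemL j)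
      exact lt_of_lt_of_le (val_lt_card_image_of_cpt hcpt ha')
        (card_image_cps_le L (Ap i) j)
    have h2 : ((Ap i).image (fun x => x j)).card
        = ((A i).image (fun a => a.val % p)).card := by
      rw [hApdef, Finset.image_image]
      have h3 : (A i).image (fun a => a.val % p)
          = ((A i).image (fun a : ZMod q => (E a) j)).image ZMod.val := by
        rw [Finset.image_image]
        apply Finset.image_congr
        intro x _
        exact (keyE x j).symm
      rw [h3, Finset.card_image_of_injective _ (ZMod.val_injective _)]
      simp only [Function.comp_def]
    have hpp : p.Prime := Nat.prime_of_mem_primeFactors hp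
    haveI : Fact p.Prime := ⟨hpp⟩
    have h3 : ((A i).image (fun a => a.val % p)).card < p := by
      have hsub : (A i).image (fun a => a.val % p) ⊆ (Finset.range p).erase 0 := by
        intro t ht
        obtain ⟨x, hx, rfl⟩ := Finset.mem_image.mp ht
        rw [Finset.mem_erase, Finset.mem_range]
        constructor
        · intro h0'
          have hu' : IsUnit (ZMod.castHom (Nat.dvd_of_mem_primeFactors hp) (ZMod p) x) :=
            (hA i x hx).map _
          have hz : ZMod.castHom (Nat.dvd_of_mem_primeFactors hp) (ZMod p) x = 0 := by
            rw [← ZMod.val_eq_zero, castHom_val]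
            exact h0'
          rw [hz] at hu'
          exact not_isUnit_zero hu'
        · exact Nat.mod_lt _ hpp.pos
      have h := Finset.card_le_card hsub
      rw [Finset.card_erase_of_mem (Finset.mem_range.mpr hpp.pos), Finset.card_range] at h
      exact lt_of_le_of_lt h (Nat.sub_lt hpp.pos Nat.one_pos)
    rw [hu i p hp, Nat.mod_eq_of_lt h3, h0, ← h2]
    exact h1
  · have e2 : finSumset q s (fun i => (B i).image (⇑E.symm))
        = (fsum B).image (⇑E.symm) := fsum_image E.symm B
    rw [e2, Finset.card_image_of_injective _ E.symm.injective]
    have h4 := card_fsum_cps_le L Ap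
    have h5 : fsum Ap = (fsum A).image (⇑E) := fsum_image E A
    calc (fsum B).card ≤ (fsum Ap).card := h4
    _ = (fsum A).card := by
        rw [h5, Finset.card_image_of_injective _ E.injective]
    _ = (finSumset q s A).card := rfl
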